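/- arXiv:2303.05139 — 3 statements merged into one kernel-verified Lean document; each statement's English description precedes it below -/
import Mathlib

section
/- The classical and refined assume/guarantee contracts are separated by causality: let φ, ψ : ℝ → Prop be time-indexed predicates and suppose there exist times 0 ≤ t < t' such that ψ fails at t (¬ψ t), φ holds throughout the interval [0, t] (∀ s, 0 ≤ s ∧ s ≤ t → φ s), and φ fails at t' (¬φ t'). Then the trace satisfies the classical contract (∀ u ≥ 0, φ u) → (∀ u ≥ 0, ψ u), but for every horizon T ≥ 0 the trace violates the refined contract, i.e. it is not the case that for all u ≥ 0, ( (∀ s, max 0 (u − T) ≤ s ∧ s ≤ u → φ s) → ψ u ). -/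
/-- A guarantee violation occurring strictly before the first assumption
violation is vacuously forgiven by the classical contract but detected by the refined
contract, for every horizon `T ≥ 0`. -/
theorem classical_refined_contract_separation (φ ψ : ℝ → Prop) (t t' : ℝ)
    (ht : 0 ≤ t) (htt' : t < t')
    (hψ : ¬ ψ t)
    (hφ : ∀ s, 0 ≤ s ∧ s ≤ t → φ s)
    (hφ' : ¬ φ t') :
    ((∀ u, 0 ≤ u → φ u) → (∀ u, 0 ≤ u → ψ u)) ∧
      (∀ T, 0 ≤ T →
        ¬ (∀ u, 0 ≤ u → (∀ s, max 0 (u - T) ≤ s ∧ s ≤ u → φ s) → ψ u)) := by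
  constructor
  · intro hall _ _
    exact absurd (hall t' (le_trans ht htt'.le)) hφ'
  · intro T hT h
    apply hψ
    apply h t ht
    intro s ⟨hs1, hs2⟩
    exact hφ s ⟨le_trans (le_max_left 0 _) hs1, hs2⟩
end

section
/- RSS longitudinal safety: let v_f, v_b ≥ 0 (initial speeds of the front and back vehicle), a ≥ 0 (maximum acceleration of the back vehicle during its reaction time), τ > 0 (reaction time), and braking rates 0 < b₁ ≤ b₂ (minimum braking of the back vehicle and maximum braking of the front vehicle). Define the back vehicle's worst-case position x_B(t) = v_b·t + a·t²/2 for 0 ≤ t ≤ τ; x_B(t) = x_B(τ) + (v_b + a·τ)·(t − τ) − b₁·(t − τ)²/2 for τ ≤ t ≤ T_B := τ + (v_b + a·τ)/b₁; and x_B(t) = x_B(T_B) for t ≥ T_B. Define the front vehicle's position x_F(t) = d₀ + v_f·t − b₂·t²/2 for 0 ≤ t ≤ v_f/b₂, and x_F(t) = d₀ + v_f²/(2·b₂) for t ≥ v_f/b₂, where d₀ is the initial gap. Let d_safe = v_b·τ + a·τ²/2 + (v_b + a·τ)²/(2·b₁) − v_f²/(2·b₂). If d₀ ≥ 0 and d₀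 ≥ d_safe, then for all t ≥ 0, x_F(t) ≥ x_B(t), i.e. no collision ever occurs. -/
set_option maxHeartbeats 1000000 in
/-- RSS longitudinal safety. If the initial gap `d₀` is nonnegative and at
least the RSS safe distance `d_safe`, then the back vehicle's worst-case trajectory never
overtakes the front vehicle's trajectory: no collision ever occurs. -/
theorem rss_longitudinal_safety (v_f v_b a τ b₁ b₂ d₀ : ℝ)
    (hvf : 0 ≤ v_f) (hvb : 0 ≤ v_b) (ha : 0 ≤ a) (hτ : 0 < τ)
    (hb₁ : 0 < b₁) (hb₁b₂ : b₁ ≤ b₂)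
    (xB xF : ℝ → ℝ)
    -- back vehicle: accelerates at rate `a` during the reaction time `[0, τ]`
    (hxB₁ : ∀ t, 0 ≤ t → t ≤ τ → xB t = v_b * t + a * t ^ 2 / 2)
    -- then brakes at rate `b₁` until stopping at time `T_B = τ + (v_b + a·τ)/b₁`
    (hxB₂ : ∀ t, τ ≤ t → t ≤ τ + (v_b + a * τ) / b₁ →
      xB t = xB τ + (v_b + a * τ) * (t - τ) - b₁ * (t - τ) ^ 2 / 2)
    -- and remains stationary afterwards
    (hxB₃ : ∀ t, τ + (v_b + a * τ) / b₁ ≤ t → xB t = xB (τ + (v_b + a * τ) / b₁))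
    -- front vehicle: brakes at rate `b₂` until stopping at time `v_f/b₂`
    (hxF₁ : ∀ t, 0 ≤ t → t ≤ v_f / b₂ → xF t = d₀ + v_f * t - b₂ * t ^ 2 / 2)
    -- and remains stationary afterwards
    (hxF₂ : ∀ t, v_f / b₂ ≤ t → xF t = d₀ + v_f ^ 2 / (2 * b₂))
    (hd₀ : 0 ≤ d₀)
    (hsafe : v_b * τ + a * τ ^ 2 / 2 + (v_b + a * τ) ^ 2 / (2 * b₁)
      - v_f ^ 2 / (2 * b₂) ≤ d₀) :
    ∀ t, 0 ≤ t → xB t ≤ xF t := by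
  have hb₂ : 0 < b₂ := lt_of_lt_of_le hb₁ hb₁b₂
  have hw0 : 0 ≤ v_b + a * τ := by positivity
  have hQ0 : (0:ℝ) ≤ (v_b + a * τ) ^ 2 / (2 * b₁) := by positivity
  -- hsafe multiplied through by 2*b₁*b₂
  have hsafe2 : 2*b₁*b₂*(v_b*τ) + b₁*b₂*(a*τ^2) + b₂*(v_b+a*τ)^2 - b₁*v_f^2
      ≤ 2*b₁*b₂*d₀ := by
    have h2 := mul_le_mul_of_nonneg_right hsafe
      (by positivity : (0:ℝ) ≤ 2*b₁*b₂)
    have e1 : (v_b * τ + a * τ ^ 2 / 2 + (v_b + a * τ) ^ 2 / (2 * b₁)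
        - v_f ^ 2 / (2 * b₂)) * (2*b₁*b₂)
        = 2*b₁*b₂*(v_b*τ) + b₁*b₂*(a*τ^2) + b₂*(v_b+a*τ)^2 - b₁*v_f^2 := by
      field_simp
    rw [e1] at h2; linarith
  have hTB : τ ≤ τ + (v_b + a * τ) / b₁ := by
    have : 0 ≤ (v_b + a * τ) / b₁ := by positivity
    linarith
  have hMTB : xB (τ + (v_b + a * τ) / b₁)
      = v_b * τ + a * τ ^ 2 / 2 + (v_b + a * τ) ^ 2 / (2 * b₁) := by
    rw [hxB₂ _ hTB le_rfl, hxB₁ τ hτ.le le_rfl]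
    field_simp; ring
  intro t ht
  rcases le_total t τ with h1 | h1
  · -- reaction phase of back vehicle
    rw [hxB₁ t ht h1]
    rcases le_total t (v_f / b₂) with h2 | h2
    · rw [hxF₁ t ht h2]
      have hbt : b₂ * t ≤ v_f := by
        have := (le_div_iff₀ hb₂).mp h2; linarith
      rcases le_total v_f (v_b + a*t + b₂*t) with h3 | h3
      · -- front slower than back: use the safe-distance budget
        have P1 : 0 ≤ b₁ * ((v_b + a*t + b₂*t - v_f) * (v_b + a*t + (v_f - b₂*t))) :=
          mul_nonneg hb₁.le (mul_nonneg (by linarith)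
            (by nlinarith [mul_nonneg ha ht]))
        have P2a : 0 ≤ b₁ * ((a*(τ - t)) * (2*v_b + a*τ + a*t)) :=
          mul_nonneg hb₁.le (mul_nonneg (mul_nonneg ha (by linarith))
            (by nlinarith [mul_nonneg ha ht, mul_nonneg ha hτ.le]))
        have P2b : 0 ≤ (b₂ - b₁) * (v_b + a*τ)^2 :=
          mul_nonneg (by linarith) (sq_nonneg _)
        have P3 : 0 ≤ b₁*b₂*(v_b*(τ - t)) :=
          mul_nonneg (mul_nonneg hb₁.le hb₂.le) (mul_nonneg hvb (by linarith))
        have P4 : 0 ≤ b₁*b₂*(a*((τ - t)*(τ + t))) :=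
          mul_nonneg (mul_nonneg hb₁.le hb₂.le)
            (mul_nonneg ha (mul_nonneg (by linarith) (by linarith)))
        nlinarith [hsafe2, mul_pos hb₁ hb₂, P1, P2a, P2b, P3, P4]
      · -- front much faster: the gap only grows
        nlinarith [hd₀, mul_nonneg (sub_nonneg.2 h3) ht,
          mul_nonneg ha (mul_nonneg ht ht), mul_nonneg hb₂.le (mul_nonneg ht ht)]
    · rw [hxF₂ t h2]
      have hΔ : v_b * t + a * t ^ 2 / 2 ≤ v_b * τ + a * τ ^ 2 / 2 := by
        nlinarith [mul_nonneg hvb (sub_nonneg.2 h1),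
          mul_nonneg ha (mul_nonneg (sub_nonneg.2 h1) (by linarith : 0 ≤ τ + t))]
      linarith [hsafe, hΔ, hQ0]
  · -- t ≥ τ
    rcases le_total t (τ + (v_b + a * τ) / b₁) with h4 | h4
    · -- braking phase of back vehicle
      rw [hxB₂ t h1 h4, hxB₁ τ hτ.le le_rfl]
      have hs0 : 0 ≤ t - τ := by linarith
      have hs : b₁ * (t - τ) ≤ v_b + a * τ := by
        have h5 : t - τ ≤ (v_b + a * τ) / b₁ := by linarith
        have := (le_div_iff₀ hb₁).mp h5; linarith
      rcases le_total t (v_f / b₂) with h2 | h2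
      · rw [hxF₁ t ht h2]
        have hbt : b₂ * t ≤ v_f := by
          have := (le_div_iff₀ hb₂).mp h2; linarith
        rcases le_total v_f (v_b + a*τ - b₁*(t-τ) + b₂*t) with h3 | h3
        · -- front slower than back: use the safe-distance budget
          have P1 : 0 ≤ b₁ * (((v_b + a*τ - b₁*(t-τ)) - (v_f - b₂*t))
              * ((v_b + a*τ - b₁*(t-τ)) + (v_f - b₂*t))) :=
            mul_nonneg hb₁.le (mul_nonneg (by linarith) (by linarith))
          have P2 : 0 ≤ (b₂ - b₁) * (v_b + a*τ - b₁*(t-τ))^2 :=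
            mul_nonneg (by linarith) (sq_nonneg _)
          nlinarith [hsafe2, mul_pos hb₁ hb₂, P1, P2]
        · -- front much faster
          nlinarith [hd₀, mul_nonneg (sub_nonneg.2 h3) ht,
            mul_nonneg ha (mul_nonneg hτ.le hτ.le),
            mul_nonneg hb₁.le (mul_nonneg hτ.le hτ.le),
            mul_nonneg (sub_nonneg.2 hb₁b₂) (mul_nonneg ht ht)]
      · rw [hxF₂ t h2]
        have hle : (v_b + a*τ) * (t - τ) - b₁ * (t - τ) ^ 2 / 2
            ≤ (v_b + a * τ) ^ 2 / (2 * b₁) := by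
          rw [le_div_iff₀ (by positivity : (0:ℝ) < 2 * b₁)]
          nlinarith [sq_nonneg (v_b + a*τ - b₁*(t-τ))]
        linarith [hsafe, hle]
    · -- back vehicle stopped
      rw [hxB₃ t h4, hMTB]
      rcases le_total t (v_f / b₂) with h2 | h2
      · rw [hxF₁ t ht h2]
        have hbt : b₂ * t ≤ v_f := by
          have := (le_div_iff₀ hb₂).mp h2; linarith
        have htb : b₁ * τ + (v_b + a * τ) ≤ b₁ * t := by
          have h5 : (v_b + a * τ) / b₁ ≤ t - τ := by linarith
          have := (div_le_iff₀ hb₁).mp h5; nlinarith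
        -- front's traveled distance already exceeds back's total
        have hMle2 : 2*b₁*(v_b*τ + a*τ^2/2) + (v_b+a*τ)^2
            ≤ 2*b₁*(v_f*t - b₂*t^2/2) := by
          have H1 : 0 ≤ (2*b₁*t) * (v_f - b₂*t) :=
            mul_nonneg (by positivity) (by linarith)
          have H2 : 0 ≤ (b₂ - b₁) * (b₁ * t^2) :=
            mul_nonneg (by linarith) (by positivity)
          have H3 : 0 ≤ (b₁*t - (b₁*τ + (v_b + a*τ)))
              * (b₁*t + (b₁*τ + (v_b + a*τ))) :=
            mul_nonneg (by linarith) (by positivity)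
          have H4 : 0 ≤ b₁*(a*τ^2) := by positivity
          have H5 : 0 ≤ b₁^2*τ^2 := by positivity
          nlinarith [H1, H2, H3, H4, H5]
        have hMle : v_b*τ + a*τ^2/2 + (v_b+a*τ)^2/(2*b₁) ≤ v_f*t - b₂*t^2/2 := by
          have e : 2*b₁*(v_b*τ + a*τ^2/2 + (v_b+a*τ)^2/(2*b₁))
              = 2*b₁*(v_b*τ + a*τ^2/2) + (v_b+a*τ)^2 := by
            field_simp
          have h6 : 2*b₁*(v_b*τ + a*τ^2/2 + (v_b+a*τ)^2/(2*b₁))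
              ≤ 2*b₁*(v_f*t - b₂*t^2/2) := by rw [e]; exact hMle2
          exact le_of_mul_le_mul_left h6 (by positivity)
        linarith [hd₀, hMle]
      · rw [hxF₂ t h2]
        linarith [hsafe]
end

section
/- The longitudinal gap attains its minimum at the initial time or in the stopped limit: let v_f, v_b ≥ 0, a ≥ 0, τ > 0, and 0 < b₁ ≤ b₂. With x_B the back vehicle's trajectory (x_B(t) = v_b·t + a·t²/2 for 0 ≤ t ≤ τ; x_B(t) = x_B(τ) + (v_b + a·τ)·(t − τ) − b₁·(t − τ)²/2 for τ ≤ t ≤ T_B := τ + (v_b + a·τ)/b₁; x_B(t) = x_B(T_B) for t ≥ T_B) and x_F the front vehicle's trajectory (x_F(t) = d₀ + v_f·t − b₂·t²/2 for 0 ≤ t ≤ v_f/b₂; x_F(t) = d₀ + v_f²/(2·b₂) for t ≥ v_f/b₂) for any d₀ ∈ ℝ, the gap g(t) = x_F(t) − x_B(t) satisfies, for all t ≥ 0: g(t) ≥ min( g(0), d₀ − d_safe ), where d_safe = v_b·τ + a·τ²/2 + (v_b + a·τ)²/(2·b₁) − v_f²/(2·b₂) and g(0) = d₀. -/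
set_option maxHeartbeats 1600000


-- K' : b₂*(2v_bτ+aτ²) + w² ≤ v_f², b₂τ ≤ v_f  ⊢  2v_b + (a+b₂)τ ≤ 2v_f
lemma aux1 {v_f v_b a τ b₂ : ℝ} (hvb : 0 ≤ v_b) (ha : 0 ≤ a) (hτ : 0 ≤ τ)
    (hb₂ : 0 ≤ b₂) (K : b₂*(2*v_b*τ + a*τ^2) + (v_b+a*τ)^2 ≤ v_f^2)
    (hbt : b₂*τ ≤ v_f) : 2*v_b + (a+b₂)*τ ≤ 2*v_f := by
  by_contra hcon
  push_neg at hcon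
  have h1 : b₂*τ < 2*v_b + a*τ := by linarith
  have h2 : 4*v_f^2 < (2*v_b + (a+b₂)*τ)^2 := by
    nlinarith [mul_nonneg hb₂ hτ]
  have h4 : b₂*τ*(b₂*τ) ≤ b₂*τ*(2*v_b + a*τ) := by
    have := mul_le_mul_of_nonneg_left h1.le (mul_nonneg hb₂ hτ)
    linarith
  nlinarith [mul_nonneg (mul_nonneg hvb hb₂) hτ, mul_nonneg (mul_nonneg ha hb₂) (sq_nonneg τ),
    mul_nonneg (mul_nonneg hvb ha) hτ, sq_nonneg (a*τ)]

-- v_f ≤ b₂τ, 0 < v_f ⊢ 2v_b + aτ ≤ v_f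
lemma aux2 {v_f v_b a τ b₂ : ℝ} (hvb : 0 ≤ v_b) (ha : 0 ≤ a) (hτ : 0 ≤ τ)
    (K : b₂*(2*v_b*τ + a*τ^2) + (v_b+a*τ)^2 ≤ v_f^2)
    (hbt : v_f ≤ b₂*τ) (hvf : 0 < v_f) : 2*v_b + a*τ ≤ v_f := by
  have h1 : 2*v_b*v_f + a*τ*v_f + (v_b+a*τ)^2 ≤ v_f^2 := by
    nlinarith [mul_nonneg hvb (sub_nonneg.2 hbt), mul_nonneg (mul_nonneg ha hτ) (sub_nonneg.2 hbt)]
  nlinarith [sq_nonneg (v_b+a*τ), mul_pos hvf hvf]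

-- hG0 : b₁(v_f−b₂τ)² ≤ b₂w²  under KR and b₂τ ≤ v_f
lemma auxG0 {v_f v_b a τ b₁ b₂ : ℝ} (hvb : 0 ≤ v_b) (ha : 0 ≤ a) (hτ : 0 ≤ τ)
    (hb₁ : 0 < b₁) (hb₁b₂ : b₁ ≤ b₂) (hbt : b₂*τ ≤ v_f)
    (KR : b₁*v_f^2 ≤ b₁*b₂*(2*v_b*τ + a*τ^2) + b₂*(v_b+a*τ)^2) :
    b₁*(v_f - b₂*τ)^2 ≤ b₂*(v_b+a*τ)^2 := by
  have hb₂ : (0:ℝ) < b₂ := hb₁.trans_le hb₁b₂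
  rcases le_total v_f (v_b + a*τ + b₂*τ) with hc | hc
  · have hq : (v_f - b₂*τ)^2 ≤ (v_b+a*τ)^2 := by
      nlinarith [sub_nonneg.2 hbt, sub_nonneg.2 hc]
    nlinarith [mul_le_mul_of_nonneg_left hq hb₁.le,
      mul_le_mul_of_nonneg_right hb₁b₂ (sq_nonneg (v_b+a*τ))]
  · have h2v : 0 ≤ 2*v_f - 2*v_b - a*τ - b₂*τ := by
      nlinarith [mul_nonneg ha hτ, mul_nonneg hb₂.le hτ]
    nlinarith [mul_nonneg (mul_nonneg (mul_nonneg hb₁.le hb₂.le) hτ) h2v]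

-- Case 1 left branch: 0 ≤ 2 v_f t − b₂ t² − 2 v_b t − a t²
lemma auxL1L {v_f v_b a τ b₂ t : ℝ} (hvb : 0 ≤ v_b) (ha : 0 ≤ a) (hτ : 0 < τ)
    (hb₂ : 0 < b₂) (ht : 0 ≤ t) (h1 : t ≤ τ) (ht2 : b₂*t ≤ v_f)
    (K : b₂*(2*v_b*τ + a*τ^2) + (v_b+a*τ)^2 ≤ v_f^2) :
    0 ≤ 2*v_f*t - b₂*t^2 - 2*v_b*t - a*t^2 := by
  rcases le_total v_f (b₂*τ) with hbt | hbt
  · rcases eq_or_lt_of_le (mul_nonneg hb₂.le ht) with hz | hz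
    · have htz : t = 0 := by
        rcases mul_eq_zero.1 hz.symm with h | h
        · exact absurd h hb₂.ne'
        · exact h
      rw [htz]; norm_num
    · have hvf : 0 < v_f := lt_of_lt_of_le hz ht2
      have hx : 2*v_b + a*τ ≤ v_f := aux2 hvb ha hτ.le K hbt hvf
      have hy : 0 ≤ v_f - 2*v_b - a*t := by nlinarith [mul_nonneg ha (sub_nonneg.2 h1)]
      nlinarith [mul_nonneg ht hy, mul_nonneg ht (sub_nonneg.2 ht2)]
  · have h2f : 2*v_b + (a+b₂)*τ ≤ 2*v_f := aux1 hvb ha hτ.le hb₂.le K hbt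
    have hy : 0 ≤ 2*v_f - 2*v_b - (a+b₂)*t := by
      nlinarith [mul_nonneg (add_nonneg ha hb₂.le) (sub_nonneg.2 h1)]
    nlinarith [mul_nonneg ht hy]

-- Case 1 right branch polynomial
lemma auxL1R {v_f v_b a τ b₁ b₂ t : ℝ} (hvf : 0 ≤ v_f) (hvb : 0 ≤ v_b) (ha : 0 ≤ a)
    (hτ : 0 < τ) (hb₁ : 0 < b₁) (hb₁b₂ : b₁ ≤ b₂) (ht : 0 ≤ t) (h1 : t ≤ τ)
    (ht2 : b₂*t ≤ v_f)
    (KR : b₁*v_f^2 ≤ b₁*b₂*(2*v_b*τ + a*τ^2) + b₂*(v_b+a*τ)^2) :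
    0 ≤ 2*b₁*b₂*(v_f*t - v_b*t) - b₁*b₂*(b₂+a)*t^2 + b₁*b₂*(2*v_b*τ + a*τ^2)
      + b₂*(v_b+a*τ)^2 - b₁*v_f^2 := by
  have hb₂ : (0:ℝ) < b₂ := hb₁.trans_le hb₁b₂
  have hS0 : 0 ≤ b₁*b₂*(2*v_b*τ + a*τ^2) + b₂*(v_b+a*τ)^2 - b₁*v_f^2 := by linarith
  rcases le_total (b₂*τ) v_f with hbt | hbt
  · -- endpoints 0 and τ
    have hS : b₁*(v_f - b₂*τ)^2 ≤ b₂*(v_b+a*τ)^2 := auxG0 hvb ha hτ.le hb₁ hb₁b₂ hbt KR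
    have hSτ : 0 ≤ b₂*(v_b+a*τ)^2 - b₁*(v_f-b₂*τ)^2 := by linarith
    nlinarith [mul_nonneg (sub_nonneg.2 h1) hS0, mul_nonneg ht hSτ,
      mul_nonneg (mul_nonneg (mul_nonneg (mul_nonneg (mul_pos hb₁ hb₂).le
        (add_nonneg ha hb₂.le)) ht) (sub_nonneg.2 h1)) hτ.le, hτ]
  · -- endpoints 0 and s = v_f/b₂
    rcases eq_or_lt_of_le hvf with hz | hvfpos
    · have htz : t = 0 := by nlinarith
      rw [htz]; ring_nf; nlinarith [KR]
    · have hEs : 0 ≤ b₁*b₂^2*(2*v_b*τ + a*τ^2) + b₂^2*(v_b+a*τ)^2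
          - 2*b₁*b₂*v_b*v_f - a*b₁*v_f^2 := by
        nlinarith [mul_nonneg (mul_nonneg (mul_nonneg hb₁.le hb₂.le) hvb) (sub_nonneg.2 hbt),
          mul_nonneg (mul_nonneg ha hb₁.le) (mul_nonneg (sub_nonneg.2 hbt) (add_nonneg hvf (mul_nonneg hb₂.le hτ.le))),
          sq_nonneg (v_b+a*τ), mul_pos hb₁ hb₂]
      nlinarith [mul_nonneg (mul_nonneg hb₂.le (sub_nonneg.2 ht2)) hS0,
        mul_nonneg (mul_nonneg hb₂.le ht) hEs,
        mul_nonneg (mul_nonneg (mul_nonneg (mul_nonneg (mul_pos hb₁ hb₂).le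
          (add_nonneg ha hb₂.le)) hvf) ht) (sub_nonneg.2 ht2),
        mul_pos hb₂ hvfpos]

-- Case 3 right branch: b₁ (v_f − b₂ t)² ≤ b₂ (w − b₁(t−τ))²
lemma auxL3R {v_f v_b a τ b₁ b₂ t : ℝ} (hvb : 0 ≤ v_b) (ha : 0 ≤ a) (hτ : 0 < τ)
    (hb₁ : 0 < b₁) (hb₁b₂ : b₁ ≤ b₂) (hu0 : τ ≤ t) (ht2 : b₂*t ≤ v_f)
    (hu : b₁*(t-τ) ≤ v_b+a*τ)
    (KR : b₁*v_f^2 ≤ b₁*b₂*(2*v_b*τ + a*τ^2) + b₂*(v_b+a*τ)^2) :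
    b₁*(v_f - b₂*t)^2 ≤ b₂*((v_b+a*τ) - b₁*(t-τ))^2 := by
  have hb₂ : (0:ℝ) < b₂ := hb₁.trans_le hb₁b₂
  have hbτt : b₂*τ ≤ b₂*t := by nlinarith [mul_nonneg hb₂.le (sub_nonneg.2 hu0)]
  have hbt : b₂*τ ≤ v_f := hbτt.trans ht2
  have hS := auxG0 hvb ha hτ.le hb₁ hb₁b₂ hbt KR
  rcases eq_or_lt_of_le (show (0:ℝ) ≤ v_f - b₂*τ by linarith) with hp | hp
  · have htτ : t = τ := by
      have h1 : t ≤ τ := by nlinarith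
      exact le_antisymm h1 hu0
    rw [htτ]
    nlinarith [hS]
  · have hq : 0 ≤ v_f - b₂*t := sub_nonneg.2 ht2
    have hu0' : 0 ≤ t - τ := sub_nonneg.2 hu0
    have hEm : 0 ≤ b₂*(b₂*(v_b+a*τ) - b₁*(v_f-b₂*τ))^2 := by positivity
    have hSs : 0 ≤ b₂*(v_b+a*τ)^2 - b₁*(v_f-b₂*τ)^2 := by linarith
    nlinarith [mul_nonneg (mul_nonneg hb₂.le hq) hSs, mul_nonneg hu0' hEm,
      mul_nonneg (mul_nonneg (mul_nonneg (mul_nonneg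
        (mul_pos hb₁ hb₂).le (sub_nonneg.2 hb₁b₂)) hp.le) hu0') hq,
      mul_pos hb₂ hp]

-- Case 5 right branch: under KR and back stopped, v_f ≤ b₂ t
lemma auxL5R {v_f v_b a τ b₁ b₂ t : ℝ} (hvf : 0 ≤ v_f) (hvb : 0 ≤ v_b) (ha : 0 ≤ a)
    (hτ : 0 < τ) (hb₁ : 0 < b₁) (hb₁b₂ : b₁ ≤ b₂) (hτt : τ ≤ t)
    (hu : v_b+a*τ ≤ b₁*(t-τ))
    (KR : b₁*v_f^2 ≤ b₁*b₂*(2*v_b*τ + a*τ^2) + b₂*(v_b+a*τ)^2) :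
    v_f ≤ b₂*t := by
  have hb₂ : (0:ℝ) < b₂ := hb₁.trans_le hb₁b₂
  have h1' : b₁*τ + (v_b+a*τ) ≤ b₁*t := by nlinarith
  have hw1 : (0:ℝ) ≤ b₁*τ + (v_b+a*τ) := by positivity
  have hsq : (b₁*v_f)^2 ≤ (b₂*(b₁*τ + (v_b+a*τ)))^2 := by
    nlinarith [mul_le_mul_of_nonneg_left KR hb₁.le,
      mul_nonneg (mul_nonneg hb₂.le (sq_nonneg (v_b+a*τ))) (sub_nonneg.2 hb₁b₂),
      mul_nonneg (mul_nonneg (mul_nonneg (mul_nonneg hb₁.le hb₂.le) hvb) hτ.le)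
        (sub_nonneg.2 hb₁b₂),
      mul_nonneg (mul_nonneg (mul_nonneg hb₁.le hb₂.le) (mul_nonneg ha (sq_nonneg τ)))
        (by linarith : (0:ℝ) ≤ 2*b₂ - b₁),
      mul_nonneg (mul_nonneg (mul_nonneg hb₁.le hb₁.le) hb₂.le) (sq_nonneg τ)]
  have hle : b₁*v_f ≤ b₂*(b₁*τ + (v_b+a*τ)) := by
    nlinarith [hsq, mul_nonneg hb₁.le hvf, mul_nonneg hb₂.le hw1]
  have h2 : b₂*(b₁*τ + (v_b+a*τ)) ≤ b₁*(b₂*t) := by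
    nlinarith [mul_le_mul_of_nonneg_left h1' hb₂.le]
  nlinarith [hb₁]

-- Case 5 left branch
lemma auxL5L {v_f v_b a τ b₁ b₂ t : ℝ} (hvb : 0 ≤ v_b) (ha : 0 ≤ a) (hτ : 0 < τ)
    (hb₁ : 0 < b₁) (hb₁b₂ : b₁ ≤ b₂) (hτt : τ ≤ t) (ht2 : b₂*t ≤ v_f)
    (hu : v_b+a*τ ≤ b₁*(t-τ)) :
    0 ≤ b₁*(2*v_f*t - b₂*t^2 - (2*v_b*τ + a*τ^2)) - (v_b+a*τ)^2 := by
  have hb₂ : (0:ℝ) < b₂ := hb₁.trans_le hb₁b₂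
  have ht0 : 0 ≤ t := hτ.le.trans hτt
  have h1' : b₁*τ + (v_b+a*τ) ≤ b₁*t := by nlinarith
  have hw1 : (0:ℝ) ≤ b₁*τ + (v_b+a*τ) := by positivity
  have hb₁t : (0:ℝ) ≤ b₁*t := mul_nonneg hb₁.le ht0
  nlinarith [mul_nonneg (mul_nonneg (mul_nonneg hb₁.le hb₁.le) ht0) (sub_nonneg.2 ht2),
    mul_nonneg hb₂.le (mul_nonneg (sub_nonneg.2 h1') (add_nonneg hb₁t hw1)),
    mul_nonneg (mul_nonneg (mul_nonneg (sub_nonneg.2 hb₁b₂) hb₁.le) hτ.le)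
      (add_nonneg hvb (mul_nonneg ha hτ.le)),
    mul_nonneg (sub_nonneg.2 hb₁b₂) (sq_nonneg (v_b+a*τ)),
    mul_nonneg (mul_nonneg hb₁.le hb₁.le) (mul_nonneg ha (sq_nonneg τ)),
    mul_nonneg (mul_nonneg (mul_nonneg hb₁.le hb₁.le) hb₂.le) (sq_nonneg τ), hb₁]

-- Case 3 left branch
lemma auxL3L {v_f v_b a τ b₁ b₂ t : ℝ} (hvb : 0 ≤ v_b) (ha : 0 ≤ a) (hτ : 0 < τ)
    (hb₁ : 0 < b₁) (hb₁b₂ : b₁ ≤ b₂) (hu0 : τ ≤ t) (ht2 : b₂*t ≤ v_f)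
    (hu : b₁*(t-τ) ≤ v_b+a*τ)
    (KL : b₁*b₂*(2*v_b*τ + a*τ^2) + b₂*(v_b+a*τ)^2 ≤ b₁*v_f^2) :
    0 ≤ 2*v_f*t - b₂*t^2 - (2*v_b*τ + a*τ^2) - 2*(v_b+a*τ)*(t-τ) + b₁*(t-τ)^2 := by
  have hb₂ : (0:ℝ) < b₂ := hb₁.trans_le hb₁b₂
  have hw0 : (0:ℝ) ≤ v_b + a*τ := by positivity
  have hu0' : 0 ≤ t - τ := sub_nonneg.2 hu0
  have K' : b₂*(2*v_b*τ + a*τ^2) + (v_b+a*τ)^2 ≤ v_f^2 := by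
    nlinarith [KL, mul_nonneg (sub_nonneg.2 hb₁b₂) (sq_nonneg (v_b+a*τ)), hb₁]
  have hbt : b₂*τ ≤ v_f := by nlinarith [mul_nonneg hb₂.le hu0']
  have h2f : 2*v_b + (a+b₂)*τ ≤ 2*v_f := aux1 hvb ha hτ.le hb₂.le K' hbt
  have hQ0 : 0 ≤ 2*v_f*τ - b₂*τ^2 - (2*v_b*τ + a*τ^2) := by
    nlinarith [mul_nonneg hτ.le (show 0 ≤ 2*v_f - 2*v_b - (a+b₂)*τ by linarith)]
  rcases le_total (b₂*(b₁*τ + (v_b+a*τ))) (b₁*v_f) with hTs | hTs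
  · -- back stops not later than front: chord over [0, w/b₁]
    have hw1 : (0:ℝ) ≤ b₁*τ + (v_b+a*τ) := by positivity
    have hPT : 0 ≤ 2*b₁*v_f*(b₁*τ + (v_b+a*τ)) - b₂*(b₁*τ + (v_b+a*τ))^2
        - b₁^2*(2*v_b*τ + a*τ^2) - b₁*(v_b+a*τ)^2 := by
      nlinarith [mul_nonneg hw1 (sub_nonneg.2 hTs),
        mul_nonneg (mul_nonneg (mul_nonneg (sub_nonneg.2 hb₁b₂) hb₁.le) hτ.le)
          (add_nonneg hvb (mul_nonneg ha hτ.le)),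
        mul_nonneg (sub_nonneg.2 hb₁b₂) (sq_nonneg (v_b+a*τ)),
        mul_nonneg (mul_nonneg hb₁.le hb₁.le) (mul_nonneg ha (sq_nonneg τ)),
        mul_nonneg (mul_nonneg (mul_nonneg hb₁.le hb₁.le) hb₂.le) (sq_nonneg τ)]
    rcases eq_or_lt_of_le hw0 with hw | hw
    · have htτ : t = τ := by
        have h1 : t ≤ τ := le_of_mul_le_mul_left (show b₁*t ≤ b₁*τ by linarith) hb₁
        exact le_antisymm h1 hu0
      rw [htτ]
      linarith [hQ0]
    · have hid : b₁*(v_b+a*τ)*(2*v_f*t - b₂*t^2 - (2*v_b*τ + a*τ^2)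
            - 2*(v_b+a*τ)*(t-τ) + b₁*(t-τ)^2)
          = (b₁*((v_b+a*τ) - b₁*(t-τ)))*(2*v_f*τ - b₂*τ^2 - (2*v_b*τ + a*τ^2))
            + (t-τ)*(2*b₁*v_f*(b₁*τ + (v_b+a*τ)) - b₂*(b₁*τ + (v_b+a*τ))^2
              - b₁^2*(2*v_b*τ + a*τ^2) - b₁*(v_b+a*τ)^2)
            + (b₂-b₁)*((v_b+a*τ)*((t-τ)*((v_b+a*τ) - b₁*(t-τ)))) := by ring
      have ht1 := mul_nonneg (mul_nonneg hb₁.le (sub_nonneg.2 hu)) hQ0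
      have ht2' := mul_nonneg hu0' hPT
      have ht3 := mul_nonneg (sub_nonneg.2 hb₁b₂) (mul_nonneg hw0
        (mul_nonneg hu0' (sub_nonneg.2 hu)))
      have hpos : (0:ℝ) < b₁*(v_b+a*τ) := mul_pos hb₁ hw
      have h9 : b₁*(v_b+a*τ) * 0 ≤ b₁*(v_b+a*τ) * (2*v_f*t - b₂*t^2
          - (2*v_b*τ + a*τ^2) - 2*(v_b+a*τ)*(t-τ) + b₁*(t-τ)^2) := by
        rw [hid]; linarith [ht1, ht2', ht3]
      exact le_of_mul_le_mul_left h9 hpos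
  · -- front stops first: chord over [0, (v_f − b₂τ)/b₂]
    have hPS : 0 ≤ b₂*v_f^2 - b₂^2*(2*v_b*τ + a*τ^2)
        - 2*b₂*(v_b+a*τ)*(v_f - b₂*τ) + b₁*(v_f - b₂*τ)^2 := by
      have hsq := sq_nonneg (b₂*(v_b+a*τ) - b₁*(v_f - b₂*τ))
      have hid2 : b₁*(b₂*v_f^2 - b₂^2*(2*v_b*τ + a*τ^2)
            - 2*b₂*(v_b+a*τ)*(v_f - b₂*τ) + b₁*(v_f - b₂*τ)^2)
          = b₂*(b₁*v_f^2 - (b₁*b₂*(2*v_b*τ + a*τ^2) + b₂*(v_b+a*τ)^2))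
            + (b₂*(v_b+a*τ) - b₁*(v_f - b₂*τ))^2 := by ring
      have hKLs : 0 ≤ b₂*(b₁*v_f^2 - (b₁*b₂*(2*v_b*τ + a*τ^2) + b₂*(v_b+a*τ)^2)) :=
        mul_nonneg hb₂.le (by linarith)
      have h9 : b₁ * 0 ≤ b₁ * (b₂*v_f^2 - b₂^2*(2*v_b*τ + a*τ^2)
          - 2*b₂*(v_b+a*τ)*(v_f - b₂*τ) + b₁*(v_f - b₂*τ)^2) := by
        rw [hid2]; linarith
      exact le_of_mul_le_mul_left h9 hb₁
    have hp0 : 0 ≤ v_f - b₂*τ := by linarith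
    have hpu : b₂*(t-τ) ≤ v_f - b₂*τ := by
      have : b₂*t - b₂*τ ≤ v_f - b₂*τ := by linarith
      linarith [this]
    rcases eq_or_lt_of_le hp0 with hp | hp
    · have htτ : t = τ := by
        have h1 : t ≤ τ := le_of_mul_le_mul_left
          (show b₂*t ≤ b₂*τ by linarith) (hb₁.trans_le hb₁b₂)
        exact le_antisymm h1 hu0
      rw [htτ]
      linarith [hQ0]
    · have hid : b₂*(v_f - b₂*τ)*(2*v_f*t - b₂*t^2 - (2*v_b*τ + a*τ^2)
            - 2*(v_b+a*τ)*(t-τ) + b₁*(t-τ)^2)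
          = (b₂*((v_f - b₂*τ) - b₂*(t-τ)))*(2*v_f*τ - b₂*τ^2 - (2*v_b*τ + a*τ^2))
            + (t-τ)*(b₂*v_f^2 - b₂^2*(2*v_b*τ + a*τ^2)
              - 2*b₂*(v_b+a*τ)*(v_f - b₂*τ) + b₁*(v_f - b₂*τ)^2)
            + (b₂-b₁)*((v_f - b₂*τ)*((t-τ)*((v_f - b₂*τ) - b₂*(t-τ)))) := by ring
      have ht1 := mul_nonneg (mul_nonneg hb₂.le (sub_nonneg.2 hpu)) hQ0
      have ht2' := mul_nonneg hu0' hPS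
      have ht3 := mul_nonneg (sub_nonneg.2 hb₁b₂) (mul_nonneg hp.le
        (mul_nonneg hu0' (sub_nonneg.2 hpu)))
      have hpos : (0:ℝ) < b₂*(v_f - b₂*τ) := mul_pos hb₂ hp
      have h9 : b₂*(v_f - b₂*τ) * 0 ≤ b₂*(v_f - b₂*τ) * (2*v_f*t - b₂*t^2
          - (2*v_b*τ + a*τ^2) - 2*(v_b+a*τ)*(t-τ) + b₁*(t-τ)^2) := by
        rw [hid]; linarith [ht1, ht2', ht3]
      exact le_of_mul_le_mul_left h9 hpos



/-- The longitudinal gap `g(t) = x_F(t) - x_B(t)` attains its minimum at the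
initial time or in the stopped limit: for all `t ≥ 0`,
`g(t) ≥ min (g 0) (d₀ - d_safe)`, where `g 0 = d₀` and
`d_safe = v_b·τ + a·τ²/2 + (v_b + a·τ)²/(2·b₁) - v_f²/(2·b₂)`. -/
theorem gap_min_at_initial_or_stopped (v_f v_b a τ b₁ b₂ d₀ : ℝ)
    (hvf : 0 ≤ v_f) (hvb : 0 ≤ v_b) (ha : 0 ≤ a) (hτ : 0 < τ)
    (hb₁ : 0 < b₁) (hb₁b₂ : b₁ ≤ b₂)
    (xB xF : ℝ → ℝ)
    -- back vehicle: accelerates at rate `a` during the reaction time `[0, τ]`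
    (hxB₁ : ∀ t, 0 ≤ t → t ≤ τ → xB t = v_b * t + a * t ^ 2 / 2)
    -- then brakes at rate `b₁` until stopping at time `T_B = τ + (v_b + a·τ)/b₁`
    (hxB₂ : ∀ t, τ ≤ t → t ≤ τ + (v_b + a * τ) / b₁ →
      xB t = xB τ + (v_b + a * τ) * (t - τ) - b₁ * (t - τ) ^ 2 / 2)
    -- and remains stationary afterwards
    (hxB₃ : ∀ t, τ + (v_b + a * τ) / b₁ ≤ t → xB t = xB (τ + (v_b + a * τ) / b₁))
    -- front vehicle: brakes at rate `b₂` until stopping at time `v_f/b₂`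
    (hxF₁ : ∀ t, 0 ≤ t → t ≤ v_f / b₂ → xF t = d₀ + v_f * t - b₂ * t ^ 2 / 2)
    -- and remains stationary afterwards
    (hxF₂ : ∀ t, v_f / b₂ ≤ t → xF t = d₀ + v_f ^ 2 / (2 * b₂)) :
    ∀ t, 0 ≤ t →
      min (xF 0 - xB 0)
          (d₀ - (v_b * τ + a * τ ^ 2 / 2 + (v_b + a * τ) ^ 2 / (2 * b₁)
            - v_f ^ 2 / (2 * b₂)))
        ≤ xF t - xB t := by
  intro t ht
  have hb₂ : (0:ℝ) < b₂ := hb₁.trans_le hb₁b₂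
  have hw0 : (0:ℝ) ≤ v_b + a * τ := by positivity
  have hs0 : (0:ℝ) ≤ v_f / b₂ := by positivity
  have hT0 : τ ≤ τ + (v_b + a * τ) / b₁ := le_add_of_nonneg_right (div_nonneg hw0 hb₁.le)
  have hxB0 : xB 0 = 0 := by rw [hxB₁ 0 le_rfl hτ.le]; ring
  have hxF0 : xF 0 = d₀ := by rw [hxF₁ 0 le_rfl hs0]; ring
  have hxBτ : xB τ = v_b * τ + a * τ ^ 2 / 2 := hxB₁ τ hτ.le le_rfl
  have hxBT : xB (τ + (v_b + a * τ) / b₁)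
      = v_b * τ + a * τ ^ 2 / 2 + (v_b + a * τ) ^ 2 / (2 * b₁) := by
    rw [hxB₂ _ hT0 le_rfl, hxBτ]
    field_simp
    ring
  rw [hxF0, hxB0, sub_zero]
  rcases le_total t τ with h1 | h1
  · rw [hxB₁ t ht h1]
    rcases le_total t (v_f / b₂) with h2 | h2
    · -- Case 1: both moving, back accelerating
      rw [hxF₁ t ht h2]
      have ht2' : b₂ * t ≤ v_f := by
        have := (le_div_iff₀ hb₂).mp h2; linarith
      rcases le_total (v_f ^ 2 / (2 * b₂))
          (v_b * τ + a * τ ^ 2 / 2 + (v_b + a * τ) ^ 2 / (2 * b₁)) with hd | hd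
      · refine (min_le_right _ _).trans ?_
        have KR : b₁*v_f^2 ≤ b₁*b₂*(2*v_b*τ + a*τ^2) + b₂*(v_b+a*τ)^2 := by
          have h := mul_le_mul_of_nonneg_left hd
            (by positivity : (0:ℝ) ≤ 2*(b₁*b₂))
          have e1 : 2*(b₁*b₂)*(v_f^2/(2*b₂)) = b₁*v_f^2 := by
            field_simp
          have e2 : 2*(b₁*b₂)*(v_b*τ + a*τ^2/2 + (v_b+a*τ)^2/(2*b₁))
              = b₁*b₂*(2*v_b*τ + a*τ^2) + b₂*(v_b+a*τ)^2 := by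
            field_simp
          linarith [h, e1, e2]
        have key := auxL1R hvf hvb ha hτ hb₁ hb₁b₂ ht h1 ht2' KR
        have e : (d₀ + v_f * t - b₂ * t ^ 2 / 2 - (v_b * t + a * t ^ 2 / 2))
            - (d₀ - (v_b * τ + a * τ ^ 2 / 2 + (v_b + a * τ) ^ 2 / (2 * b₁)
              - v_f ^ 2 / (2 * b₂)))
            = (2*b₁*b₂*(v_f*t - v_b*t) - b₁*b₂*(b₂+a)*t^2
              + b₁*b₂*(2*v_b*τ + a*τ^2) + b₂*(v_b+a*τ)^2 - b₁*v_f^2)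
              / (2*(b₁*b₂)) := by
          field_simp; ring
        have h0 := div_nonneg key (by positivity : (0:ℝ) ≤ 2*(b₁*b₂))
        linarith [e, h0]
      · refine (min_le_left _ _).trans ?_
        have KL : b₁*b₂*(2*v_b*τ + a*τ^2) + b₂*(v_b+a*τ)^2 ≤ b₁*v_f^2 := by
          have h := mul_le_mul_of_nonneg_left hd
            (by positivity : (0:ℝ) ≤ 2*(b₁*b₂))
          have e1 : 2*(b₁*b₂)*(v_f^2/(2*b₂)) = b₁*v_f^2 := by
            field_simp
          have e2 : 2*(b₁*b₂)*(v_b*τ + a*τ^2/2 + (v_b+a*τ)^2/(2*b₁))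
              = b₁*b₂*(2*v_b*τ + a*τ^2) + b₂*(v_b+a*τ)^2 := by
            field_simp
          linarith [h, e1, e2]
        have K' : b₂*(2*v_b*τ + a*τ^2) + (v_b+a*τ)^2 ≤ v_f^2 := by
          have h9 : b₁*(b₂*(2*v_b*τ + a*τ^2) + (v_b+a*τ)^2) ≤ b₁*(v_f^2) := by
            have := mul_nonneg (sub_nonneg.2 hb₁b₂) (sq_nonneg (v_b+a*τ))
            linarith [KL]
          exact le_of_mul_le_mul_left h9 hb₁
        have key := auxL1L hvb ha hτ hb₂ ht h1 ht2' K'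
        have e : (d₀ + v_f * t - b₂ * t ^ 2 / 2 - (v_b * t + a * t ^ 2 / 2)) - d₀
            = (2*v_f*t - b₂*t^2 - 2*v_b*t - a*t^2)/2 := by ring
        linarith [e, key]
    · -- Case 2: front stopped, back accelerating
      rw [hxF₂ t h2]
      refine (min_le_right _ _).trans ?_
      have hmono : 0 ≤ 2*v_b*τ + a*τ^2 - 2*v_b*t - a*t^2 := by
        have h₁ := mul_nonneg hvb (sub_nonneg.2 h1)
        have h₂ := mul_nonneg ha (mul_nonneg (sub_nonneg.2 h1) (add_nonneg ht hτ.le))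
        nlinarith [h₁, h₂]
      have key : 0 ≤ b₁*(2*v_b*τ + a*τ^2 - 2*v_b*t - a*t^2) + (v_b+a*τ)^2 := by
        have := mul_nonneg hb₁.le hmono
        linarith [sq_nonneg (v_b+a*τ)]
      have e : (d₀ + v_f ^ 2 / (2 * b₂) - (v_b * t + a * t ^ 2 / 2))
          - (d₀ - (v_b * τ + a * τ ^ 2 / 2 + (v_b + a * τ) ^ 2 / (2 * b₁)
            - v_f ^ 2 / (2 * b₂)))
          = (b₁*(2*v_b*τ + a*τ^2 - 2*v_b*t - a*t^2) + (v_b+a*τ)^2)/(2*b₁) := by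
        field_simp; ring
      have h0 := div_nonneg key (by positivity : (0:ℝ) ≤ 2*b₁)
      linarith [e, h0]
  · rcases le_total t (τ + (v_b + a * τ) / b₁) with h3 | h3
    · rw [hxB₂ t h1 h3, hxBτ]
      have hu : b₁*(t-τ) ≤ v_b + a*τ := by
        have := (le_div_iff₀ hb₁).mp (by linarith : t - τ ≤ (v_b + a*τ)/b₁)
        linarith
      rcases le_total t (v_f / b₂) with h2 | h2
      · -- Case 3: both braking
        rw [hxF₁ t (hτ.le.trans h1) h2]
        have ht2' : b₂ * t ≤ v_f := by
          have := (le_div_iff₀ hb₂).mp h2; linarith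
        rcases le_total (v_f ^ 2 / (2 * b₂))
            (v_b * τ + a * τ ^ 2 / 2 + (v_b + a * τ) ^ 2 / (2 * b₁)) with hd | hd
        · refine (min_le_right _ _).trans ?_
          have KR : b₁*v_f^2 ≤ b₁*b₂*(2*v_b*τ + a*τ^2) + b₂*(v_b+a*τ)^2 := by
            have h := mul_le_mul_of_nonneg_left hd
              (by positivity : (0:ℝ) ≤ 2*(b₁*b₂))
            have e1 : 2*(b₁*b₂)*(v_f^2/(2*b₂)) = b₁*v_f^2 := by
              field_simp
            have e2 : 2*(b₁*b₂)*(v_b*τ + a*τ^2/2 + (v_b+a*τ)^2/(2*b₁))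
                = b₁*b₂*(2*v_b*τ + a*τ^2) + b₂*(v_b+a*τ)^2 := by
              field_simp
            linarith [h, e1, e2]
          have key0 := auxL3R hvb ha hτ hb₁ hb₁b₂ h1 ht2' hu KR
          have key : 0 ≤ b₂*((v_b+a*τ) - b₁*(t-τ))^2 - b₁*(v_f - b₂*t)^2 := by
            linarith [key0]
          have e : (d₀ + v_f * t - b₂ * t ^ 2 / 2 - (v_b * τ + a * τ ^ 2 / 2
                + (v_b + a * τ) * (t - τ) - b₁ * (t - τ) ^ 2 / 2))
              - (d₀ - (v_b * τ + a * τ ^ 2 / 2 + (v_b + a * τ) ^ 2 / (2 * b₁)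
                - v_f ^ 2 / (2 * b₂)))
              = (b₂*((v_b+a*τ) - b₁*(t-τ))^2 - b₁*(v_f - b₂*t)^2)
                / (2*(b₁*b₂)) := by
            field_simp; ring
          have h0 := div_nonneg key (by positivity : (0:ℝ) ≤ 2*(b₁*b₂))
          linarith [e, h0]
        · refine (min_le_left _ _).trans ?_
          have KL : b₁*b₂*(2*v_b*τ + a*τ^2) + b₂*(v_b+a*τ)^2 ≤ b₁*v_f^2 := by
            have h := mul_le_mul_of_nonneg_left hd
              (by positivity : (0:ℝ) ≤ 2*(b₁*b₂))
            have e1 : 2*(b₁*b₂)*(v_f^2/(2*b₂)) = b₁*v_f^2 := by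
              field_simp
            have e2 : 2*(b₁*b₂)*(v_b*τ + a*τ^2/2 + (v_b+a*τ)^2/(2*b₁))
                = b₁*b₂*(2*v_b*τ + a*τ^2) + b₂*(v_b+a*τ)^2 := by
              field_simp
            linarith [h, e1, e2]
          have key := auxL3L hvb ha hτ hb₁ hb₁b₂ h1 ht2' hu KL
          have e : (d₀ + v_f * t - b₂ * t ^ 2 / 2 - (v_b * τ + a * τ ^ 2 / 2
                + (v_b + a * τ) * (t - τ) - b₁ * (t - τ) ^ 2 / 2)) - d₀
              = (2*v_f*t - b₂*t^2 - (2*v_b*τ + a*τ^2) - 2*(v_b+a*τ)*(t-τ)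
                + b₁*(t-τ)^2)/2 := by ring
          linarith [e, key]
      · -- Case 4: front stopped, back braking
        rw [hxF₂ t h2]
        refine (min_le_right _ _).trans ?_
        have key : (0:ℝ) ≤ ((v_b+a*τ) - b₁*(t-τ))^2 := sq_nonneg _
        have e : (d₀ + v_f ^ 2 / (2 * b₂) - (v_b * τ + a * τ ^ 2 / 2
              + (v_b + a * τ) * (t - τ) - b₁ * (t - τ) ^ 2 / 2))
            - (d₀ - (v_b * τ + a * τ ^ 2 / 2 + (v_b + a * τ) ^ 2 / (2 * b₁)
              - v_f ^ 2 / (2 * b₂)))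
            = ((v_b+a*τ) - b₁*(t-τ))^2 / (2*b₁) := by
          field_simp; ring
        have h0 := div_nonneg key (by positivity : (0:ℝ) ≤ 2*b₁)
        linarith [e, h0]
    · rw [hxB₃ t h3, hxBT]
      have hτt : τ ≤ t := hT0.trans h3
      have hu5 : v_b + a*τ ≤ b₁*(t-τ) := by
        have := (div_le_iff₀ hb₁).mp (by linarith : (v_b + a*τ)/b₁ ≤ t - τ)
        linarith
      rcases le_total t (v_f / b₂) with h2 | h2
      · -- Case 5: back stopped, front braking
        rw [hxF₁ t ht h2]
        have ht2' : b₂ * t ≤ v_f := by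
          have := (le_div_iff₀ hb₂).mp h2; linarith
        rcases le_total (v_f ^ 2 / (2 * b₂))
            (v_b * τ + a * τ ^ 2 / 2 + (v_b + a * τ) ^ 2 / (2 * b₁)) with hd | hd
        · refine (min_le_right _ _).trans ?_
          have KR : b₁*v_f^2 ≤ b₁*b₂*(2*v_b*τ + a*τ^2) + b₂*(v_b+a*τ)^2 := by
            have h := mul_le_mul_of_nonneg_left hd
              (by positivity : (0:ℝ) ≤ 2*(b₁*b₂))
            have e1 : 2*(b₁*b₂)*(v_f^2/(2*b₂)) = b₁*v_f^2 := by
              field_simp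
            have e2 : 2*(b₁*b₂)*(v_b*τ + a*τ^2/2 + (v_b+a*τ)^2/(2*b₁))
                = b₁*b₂*(2*v_b*τ + a*τ^2) + b₂*(v_b+a*τ)^2 := by
              field_simp
            linarith [h, e1, e2]
          have hv := auxL5R hvf hvb ha hτ hb₁ hb₁b₂ hτt hu5 KR
          have hz : v_f - b₂*t = 0 := by linarith [ht2']
          have key : (0:ℝ) ≤ -(v_f - b₂*t)^2 := by rw [hz]; norm_num
          have e : (d₀ + v_f * t - b₂ * t ^ 2 / 2 - (v_b * τ + a * τ ^ 2 / 2
                + (v_b + a * τ) ^ 2 / (2 * b₁)))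
              - (d₀ - (v_b * τ + a * τ ^ 2 / 2 + (v_b + a * τ) ^ 2 / (2 * b₁)
                - v_f ^ 2 / (2 * b₂)))
              = (-(v_f - b₂*t)^2) / (2*b₂) := by
            field_simp; ring
          have h0 := div_nonneg key (by positivity : (0:ℝ) ≤ 2*b₂)
          linarith [e, h0]
        · refine (min_le_left _ _).trans ?_
          have key := auxL5L hvb ha hτ hb₁ hb₁b₂ hτt ht2' hu5
          have e : (d₀ + v_f * t - b₂ * t ^ 2 / 2 - (v_b * τ + a * τ ^ 2 / 2
                + (v_b + a * τ) ^ 2 / (2 * b₁))) - d₀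
              = (b₁*(2*v_f*t - b₂*t^2 - (2*v_b*τ + a*τ^2)) - (v_b+a*τ)^2)
                / (2*b₁) := by
            field_simp; ring
          have h0 := div_nonneg key (by positivity : (0:ℝ) ≤ 2*b₁)
          linarith [e, h0]
      · -- Case 6: both stopped
        rw [hxF₂ t h2]
        refine (min_le_right _ _).trans ?_
        linarith
end
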